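/- arXiv:2509.09753 — 5 statements merged into one kernel-verified Lean document; each statement's English description precedes it below -/
import Mathlib

section
/- For all nonnegative integers n and m with m < n, the alternating sum ∑_{k=0}^{n} (-1)^k * C(n,k) * (n-k)^m equals 0. -/
open Finset Function
open scoped fwdDiff

lemma aux_fwdDiff_pow (m : ℕ) : ∀ n, m < n →
    (fwdDiff (1:ℕ))^[n] (fun x : ℕ => (x : ℤ) ^ m) = 0 := by
  induction m using Nat.strong_induction_on with
  | _ m IH =>
    intro n hn
    obtain ⟨k, rfl⟩ : ∃ k, n = k + 1 := ⟨n - 1, by omega⟩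
    rw [Function.iterate_succ_apply]
    have hΔ : fwdDiff (1:ℕ) (fun x : ℕ => (x : ℤ) ^ m)
        = ∑ j ∈ range m, (m.choose j : ℤ) • (fun x : ℕ => (x : ℤ) ^ j) := by
      funext x
      simp only [fwdDiff, Finset.sum_apply, Pi.smul_apply, zsmul_eq_mul]
      push_cast
      rw [add_pow, Finset.sum_range_succ]
      simp [mul_comm]
    rw [hΔ, fwdDiff_iter_finset_sum]
    apply Finset.sum_eq_zero
    intro j hj
    have hjm := Finset.mem_range.mp hj
    rw [fwdDiff_iter_const_smul, IH j hjm k (by omega), smul_zero]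

theorem stmt0 (n m : ℕ) (h : m < n) :
    ∑ k ∈ Finset.range (n + 1), (-1 : ℤ) ^ k * (n.choose k) * ((n - k : ℕ) : ℤ) ^ m = 0 := by
  have key := aux_fwdDiff_pow m n h
  have h0 := congrFun key 0
  rw [fwdDiff_iter_eq_sum_shift] at h0
  simp only [Pi.zero_apply, zero_add, smul_eq_mul, mul_one, smul_eq_mul] at h0
  rw [← Finset.sum_range_reflect]
  rw [← h0]
  apply Finset.sum_congr rfl
  intro k hk
  rw [Finset.mem_range] at hk
  have hkn : k ≤ n := by omega
  have h1 : n + 1 - 1 - k = n - k := by omega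
  have h2 : n - (n - k) = k := by omega
  rw [h1, Nat.choose_symm hkn, h2]
end

section
/- For every nonnegative integer n, ∑_{k=0}^{n} (-1)^k * C(n,k) * (n-k)^{n+1} = n * (n+1)! / 2. -/
open Nat Finset

private def T (m n : ℕ) : ℤ :=
  ∑ k ∈ Finset.range (n + 1), (-1 : ℤ) ^ k * (n.choose k) * ((n - k : ℕ) : ℤ) ^ m

private lemma choose_aux (n k : ℕ) :
    (n + 1 - k) * (n + 1).choose k = (n + 1) * n.choose k := by
  rw [Nat.add_one_mul_choose_eq, mul_comm, Nat.choose_succ_right_eq]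

private lemma T_rec (m n : ℕ) : T (m + 1) (n + 1) = (n + 1) * (T m n + T m (n + 1)) := by
  have hU : T (m + 1) (n + 1)
      = (n + 1) * ∑ k ∈ Finset.range (n + 2),
          (-1 : ℤ) ^ k * (n.choose k) * ((n + 1 - k : ℕ) : ℤ) ^ m := by
    rw [T, Finset.mul_sum]
    apply Finset.sum_congr rfl
    intro k _
    have h : ((n + 1 - k : ℕ) : ℤ) * ((n + 1).choose k : ℤ)
        = ((n + 1 : ℕ) : ℤ) * (n.choose k : ℤ) := by
      exact_mod_cast congrArg (Nat.cast : ℕ → ℤ) (choose_aux n k)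
    rw [pow_succ]
    simp only [Nat.cast_add, Nat.cast_one] at h ⊢
    linear_combination ((-1:ℤ) ^ k * ((n + 1 - k : ℕ) : ℤ) ^ m) * h
  have key : (∑ k ∈ Finset.range (n + 2),
      ((-1 : ℤ) ^ k * (n.choose k) * ((n + 1 - k : ℕ) : ℤ) ^ m
        - (-1 : ℤ) ^ k * ((n + 1).choose k) * ((n + 1 - k : ℕ) : ℤ) ^ m)) = T m n := by
    rw [Finset.sum_range_succ']
    simp only [Nat.succ_sub_succ, pow_zero, Nat.choose_zero_right]
    rw [T]
    have : ∀ j ∈ Finset.range (n + 1),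
        (-1 : ℤ) ^ (j + 1) * (n.choose (j + 1)) * ((n - j : ℕ) : ℤ) ^ m
          - (-1 : ℤ) ^ (j + 1) * ((n + 1).choose (j + 1)) * ((n - j : ℕ) : ℤ) ^ m
        = (-1 : ℤ) ^ j * (n.choose j) * ((n - j : ℕ) : ℤ) ^ m := by
      intro j _
      have h : (((n + 1).choose (j + 1) : ℤ)) = (n.choose j : ℤ) + (n.choose (j + 1) : ℤ) := by
        exact_mod_cast congrArg (Nat.cast : ℕ → ℤ) (Nat.choose_succ_succ n j)
      rw [pow_succ]
      linear_combination (-1 : ℤ) ^ j * ((n - j : ℕ) : ℤ) ^ m * h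
    rw [Finset.sum_congr rfl this]
    ring
  have hsub : T m (n + 1) = ∑ k ∈ Finset.range (n + 2),
      (-1 : ℤ) ^ k * ((n + 1).choose k) * ((n + 1 - k : ℕ) : ℤ) ^ m := rfl
  rw [Finset.sum_sub_distrib, ← hsub] at key
  rw [hU]
  linear_combination ((n : ℤ) + 1) * key

private lemma T_zero (n : ℕ) : T 0 (n + 1) = 0 := by
  simp only [T, pow_zero, mul_one]
  rw [Int.alternating_sum_range_choose]
  simp

private lemma T_vanish : ∀ m n : ℕ, m ≤ n → T m (n + 1) = 0 := by
  intro m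
  induction m with
  | zero => intro n _; exact T_zero n
  | succ m ih =>
    intro n hm
    obtain ⟨n', rfl⟩ : ∃ n', n = n' + 1 := ⟨n - 1, by omega⟩
    rw [T_rec, ih n' (by omega), ih (n' + 1) (by omega)]
    ring

private lemma T_diag : ∀ n : ℕ, T n n = (n)! := by
  intro n
  induction n with
  | zero => simp [T]
  | succ n ih =>
    rw [T_rec, ih, T_vanish n n le_rfl, Nat.factorial_succ]
    push_cast
    ring

theorem stmt2 (n : ℕ) :
    2 * ∑ k ∈ Finset.range (n + 1), (-1 : ℤ) ^ k * (n.choose k) * ((n - k : ℕ) : ℤ) ^ (n + 1)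
      = (n : ℤ) * ((n + 1)! : ℤ) := by
  induction n with
  | zero => simp
  | succ n ih =>
    show 2 * T (n + 2) (n + 1) = _
    rw [T_rec, T_diag]
    have ih' : 2 * T (n + 1) n = (n : ℤ) * ((n + 1)! : ℤ) := ih
    rw [Nat.factorial_succ (n + 1)]
    push_cast
    push_cast at ih'
    linear_combination ((n : ℤ) + 1) * ih'
end

section
/- For every nonnegative integer n, ∑_{k=0}^{n} (-1)^k * C(n,k) * k^n = (-1)^n * n!. -/
open Nat Finset fwdDiff

lemma fd_pow (j : ℕ) :
    fwdDiff (1:ℕ) (fun x : ℕ => (x : ℤ) ^ j) =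
      fun x : ℕ => ∑ i ∈ range j, (j.choose i : ℤ) * (x : ℤ) ^ i := by
  funext x
  simp only [fwdDiff]
  push_cast
  rw [add_pow]
  rw [Finset.sum_range_succ]
  simp [mul_comm]

lemma fd_iter_pow (n : ℕ) : ∀ j ≤ n,
    (fwdDiff (1:ℕ))^[n] (fun x : ℕ => (x : ℤ) ^ j) 0 = if j = n then (n ! : ℤ) else 0 := by
  induction n with
  | zero => intro j hj; interval_cases j; simp
  | succ n IH =>
    intro j hj
    rw [Function.iterate_succ_apply, fd_pow]
    have : (fwdDiff (1:ℕ))^[n] (fun x : ℕ => ∑ i ∈ range j, (j.choose i : ℤ) * (x : ℤ) ^ i) 0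
        = ∑ i ∈ range j, (j.choose i : ℤ) * (fwdDiff (1:ℕ))^[n] (fun x : ℕ => (x : ℤ) ^ i) 0 := by
      have := fwdDiff_iter_finset_sum (1 : ℕ)
        (range j) (fun i => fun x : ℕ => (j.choose i : ℤ) * (x : ℤ) ^ i) n
      have h2 : (fun x : ℕ => ∑ i ∈ range j, (j.choose i : ℤ) * (x : ℤ) ^ i)
          = ∑ i ∈ range j, (fun x : ℕ => (j.choose i : ℤ) * (x : ℤ) ^ i) := by
        funext x; simp
      rw [h2, this]
      simp only [Finset.sum_apply]
      congr 1; funext i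
      have : (fun x : ℕ => (j.choose i : ℤ) * (x : ℤ) ^ i)
          = (j.choose i : ℤ) • (fun x : ℕ => (x : ℤ) ^ i) := by funext x; simp
      rw [this, fwdDiff_iter_const_smul]; simp
    rw [this]
    rcases eq_or_lt_of_le hj with rfl | hlt
    · rw [if_pos rfl, Finset.sum_range_succ_comm]
      rw [IH n le_rfl, if_pos rfl]
      have : ∀ i ∈ range n, ((n+1).choose i : ℤ) * (fwdDiff (1:ℕ))^[n] (fun x : ℕ => (x : ℤ) ^ i) 0 = 0 := by
        intro i hi
        rw [IH i (le_of_lt (mem_range.mp hi)), if_neg (mem_range.mp hi).ne, mul_zero]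
      rw [Finset.sum_eq_zero this, add_zero, choose_succ_self_right]
      push_cast [Nat.factorial_succ]
      ring
    · rw [if_neg (by omega)]
      apply Finset.sum_eq_zero
      intro i hi
      have hi2 := mem_range.mp hi
      rw [IH i (by omega : i ≤ n), if_neg (by omega), mul_zero]

theorem stmt5 (n : ℕ) :
    ∑ k ∈ Finset.range (n + 1), (-1 : ℤ) ^ k * (n.choose k) * (k : ℤ) ^ n
      = (-1) ^ n * (n ! : ℤ) := by
  have h := fwdDiff_iter_eq_sum_shift (1 : ℕ) (fun x : ℕ => (x : ℤ) ^ n) n 0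
  rw [fd_iter_pow n n le_rfl, if_pos rfl] at h
  have h2 : ∑ k ∈ Finset.range (n + 1), ((-1 : ℤ) ^ (n - k) * n.choose k) • ((0 + k • 1 : ℕ) : ℤ) ^ n
      = ∑ k ∈ Finset.range (n + 1), (-1 : ℤ) ^ (n - k) * n.choose k * (k : ℤ) ^ n := by
    apply Finset.sum_congr rfl; intro k hk; simp [smul_eq_mul]
  rw [h2] at h
  calc ∑ k ∈ Finset.range (n + 1), (-1 : ℤ) ^ k * (n.choose k) * (k : ℤ) ^ n
      = (-1) ^ n * ∑ k ∈ Finset.range (n + 1), (-1 : ℤ) ^ (n - k) * n.choose k * (k : ℤ) ^ n := by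
        rw [Finset.mul_sum]
        apply Finset.sum_congr rfl
        intro k hk
        have hk' : k ≤ n := by have := mem_range.mp hk; omega
        rw [← mul_assoc ((-1:ℤ)^n), ← mul_assoc, ← pow_add]
        congr 2
        rw [show n + (n - k) = 2 * (n - k) + k by omega, pow_add, pow_mul]
        simp
    _ = (-1) ^ n * (n ! : ℤ) := by rw [← h]
end

section
/- For every nonnegative integer n, ∑_{k=0}^{n} (-1)^k * C(n,k) * k^{n+1} = (-1)^n * n * (n+1)! / 2. -/
open Nat Finset

def B (m i : ℕ) : ℤ := ∑ k ∈ Finset.range (m+1), (-1)^k * (m.choose k) * (k:ℤ)^i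

lemma key (m i : ℕ) :
    B (m+1) (i+1) = -(m+1) * ∑ t ∈ Finset.range (i+1), (i.choose t : ℤ) * B m t := by
  unfold B
  rw [Finset.sum_range_succ']
  simp only [Nat.cast_zero, zero_pow (Nat.succ_ne_zero i), mul_zero, add_zero]
  have hterm : ∀ j, (-1:ℤ)^(j+1) * ((m+1).choose (j+1)) * (((j:ℕ)+1:ℕ):ℤ)^(i+1)
      = -((m+1:ℤ)) * ((-1)^j * (m.choose j) * ((j:ℤ)+1)^i) := by
    intro j
    have h : ((m+1).choose (j+1) : ℤ) * ((j:ℤ)+1) = ((m:ℤ)+1) * (m.choose j) := by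
      exact_mod_cast (Nat.add_one_mul_choose_eq m j).symm
    push_cast
    rw [pow_succ (-1:ℤ) j]
    linear_combination ((-(-1:ℤ)^j) * ((j:ℤ)+1)^i) * h
  rw [Finset.sum_congr rfl (fun j _ => hterm j)]
  rw [← Finset.mul_sum]
  congr 1
  have hexp : ∀ j : ℕ, ((j:ℤ)+1)^i = ∑ t ∈ Finset.range (i+1), (j:ℤ)^t * (i.choose t) := by
    intro j
    simpa using add_pow (j:ℤ) 1 i
  calc ∑ j ∈ Finset.range (m+1), (-1:ℤ)^j * (m.choose j) * ((j:ℤ)+1)^i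
      = ∑ j ∈ Finset.range (m+1), ∑ t ∈ Finset.range (i+1),
          (i.choose t : ℤ) * ((-1)^j * (m.choose j) * (j:ℤ)^t) := by
        refine Finset.sum_congr rfl fun j _ => ?_
        rw [hexp j, Finset.mul_sum]
        refine Finset.sum_congr rfl fun t _ => by ring
    _ = ∑ t ∈ Finset.range (i+1), (i.choose t : ℤ) * B m t := by
        rw [Finset.sum_comm]
        refine Finset.sum_congr rfl fun t _ => ?_
        rw [B, Finset.mul_sum]

lemma Blt : ∀ m, ∀ i < m, B m i = 0 := by
  intro m
  induction m with
  | zero => intro i hi; omega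
  | succ m ih =>
    intro i hi
    cases i with
    | zero =>
      have := Int.alternating_sum_range_choose_of_ne (Nat.succ_ne_zero m)
      simpa [B] using this
    | succ t =>
      rw [key]
      have : ∑ s ∈ Finset.range (t+1), ((t.choose s : ℤ)) * B m s = 0 := by
        refine Finset.sum_eq_zero fun s hs => ?_
        rw [ih s (by simp at hs; omega), mul_zero]
      rw [this, mul_zero]

lemma Beq : ∀ m, B m m = (-1)^m * m ! := by
  intro m
  induction m with
  | zero => simp [B]
  | succ m ih =>
    rw [key, Finset.sum_range_succ, Nat.choose_self]
    have : ∑ t ∈ Finset.range m, ((m.choose t : ℤ)) * B m t = 0 := by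
      refine Finset.sum_eq_zero fun t ht => ?_
      rw [Blt m t (Finset.mem_range.mp ht), mul_zero]
    rw [this, ih, Nat.factorial_succ]
    push_cast
    ring

lemma Bmain : ∀ n : ℕ, 2 * B n (n+1) = (-1)^n * (n:ℤ) * ((n+1)! : ℤ) := by
  intro n
  induction n with
  | zero => simp [B]
  | succ n ih =>
    rw [key, Finset.sum_range_succ, Finset.sum_range_succ, Nat.choose_self,
      Nat.choose_succ_self_right]
    have h0 : ∑ t ∈ Finset.range n, (((n+1).choose t : ℤ)) * B n t = 0 := by
      refine Finset.sum_eq_zero fun t ht => ?_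
      rw [Blt n t (Finset.mem_range.mp ht), mul_zero]
    rw [h0, Beq n]
    have hf1 : ((n+1+1)! : ℤ) = (n+2) * ((n+1)! : ℤ) := by
      rw [Nat.factorial_succ]; push_cast; ring
    have hf2 : ((n+1)! : ℤ) = (n+1) * (n ! : ℤ) := by
      rw [Nat.factorial_succ]; push_cast; ring
    rw [hf1, hf2]
    push_cast
    linear_combination (-((n:ℤ)+1)) * ih + (-((n:ℤ)+1) * (-1)^n * (n:ℤ)) * hf2

theorem stmt6 (n : ℕ) :
    2 * ∑ k ∈ Finset.range (n + 1), (-1 : ℤ) ^ k * (n.choose k) * (k : ℤ) ^ (n + 1)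
      = (-1) ^ n * (n : ℤ) * ((n + 1)! : ℤ) := by
  exact Bmain n
end

section
/- For every nonnegative integer n, the (n+1)-st derivative of the function x ↦ (e^x - 1)^n at x = 0 equals n*(n+1)!/2. -/
open Nat

private lemma g_smooth (n : ℕ) : ContDiff ℝ (⊤ : ℕ∞) (fun x : ℝ => (Real.exp x - 1) ^ n) :=
  (Real.contDiff_exp.sub contDiff_const).pow n

private lemma id_add (m : ℕ) (f g : ℝ → ℝ) (hf : ContDiff ℝ (⊤ : ℕ∞) f)
    (hg : ContDiff ℝ (⊤ : ℕ∞) g) (x : ℝ) :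
    iteratedDeriv m (fun y => f y + g y) x = iteratedDeriv m f x + iteratedDeriv m g x := by
  simp only [← iteratedDerivWithin_univ]
  exact iteratedDerivWithin_add (Set.mem_univ x) uniqueDiffOn_univ
    (hf.of_le (by exact_mod_cast le_top)).contDiffWithinAt (hg.of_le (by exact_mod_cast le_top)).contDiffWithinAt

private lemma id_cmul (m : ℕ) (c : ℝ) (f : ℝ → ℝ) (hf : ContDiff ℝ (⊤ : ℕ∞) f) (x : ℝ) :
    iteratedDeriv m (fun y => c * f y) x = c * iteratedDeriv m f x := by
  simp only [← iteratedDerivWithin_univ]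
  exact iteratedDerivWithin_const_mul (Set.mem_univ x) uniqueDiffOn_univ c
    (hf.of_le (by exact_mod_cast le_top)).contDiffWithinAt

private lemma g_deriv (n : ℕ) :
    deriv (fun x : ℝ => (Real.exp x - 1) ^ (n + 1)) =
      fun x : ℝ => ((n : ℝ) + 1) * ((Real.exp x - 1) ^ (n + 1) + (Real.exp x - 1) ^ n) := by
  funext x
  have h : HasDerivAt (fun x : ℝ => (Real.exp x - 1) ^ (n + 1))
      ((↑(n + 1) : ℝ) * (Real.exp x - 1) ^ (n + 1 - 1) * Real.exp x) x :=
    (((Real.hasDerivAt_exp x).sub_const 1).pow (n + 1))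
  rw [h.deriv]
  have : Real.exp x = (Real.exp x - 1) + 1 := by ring
  simp only [Nat.add_sub_cancel, Nat.cast_add, Nat.cast_one]
  rw [this]
  ring

private lemma key_s14 (m n : ℕ) (h : m ≤ n + 1) :
    iteratedDeriv m (fun x : ℝ => (Real.exp x - 1) ^ n) 0 =
      if m < n then 0 else if m = n then ((n)! : ℝ) else (n : ℝ) * ((n + 1)! : ℝ) / 2 := by
  induction m generalizing n with
  | zero =>
    cases n with
    | zero => simp
    | succ k => simp
  | succ m ih =>
    cases n with
    | zero =>
      -- m + 1 ≤ 1, so m = 0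
      have hm0 : m = 0 := by omega
      subst hm0
      simp [iteratedDeriv_succ]
    | succ k =>
      rw [iteratedDeriv_succ', g_deriv k]
      have hrw : (fun x : ℝ => ((k : ℝ) + 1) * ((Real.exp x - 1) ^ (k + 1) + (Real.exp x - 1) ^ k))
          = fun x : ℝ => ((k : ℝ) + 1) * ((fun x : ℝ => (Real.exp x - 1) ^ (k + 1)) x
              + (fun x : ℝ => (Real.exp x - 1) ^ k) x) := rfl
      rw [hrw, id_cmul m _ _ ((g_smooth (k + 1)).add (g_smooth k)),
        id_add m _ _ (g_smooth (k + 1)) (g_smooth k)]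
      have h1 : m ≤ k + 1 + 1 := by omega
      have h2 : m ≤ k + 1 := by omega
      rw [ih (k + 1) h1, ih k h2]
      split_ifs <;> try omega
      all_goals (push_cast [Nat.factorial_succ]; ring)

theorem stmt14 (n : ℕ) :
    iteratedDeriv (n + 1) (fun x : ℝ => (Real.exp x - 1) ^ n) 0
      = (n : ℝ) * ((n + 1)! : ℝ) / 2 := by
  have := key_s14 (n + 1) n le_rfl
  simpa using this
end
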